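/- For the cochain complex with basis a₁,...,a₅ (degree 1), b₁,...,b₆ (degree 0), c₁,c₂ (degree −1) and differential μ¹ given by μ¹(b₁)=a₄+a₅, μ¹(b₂)=a₁+a₃+a₄+a₅, μ¹(b₃)=a₃, μ¹(b₄)=a₂, μ¹(b₅)=0, μ¹(b₆)=a₁+a₂, μ¹(c₁)=b₅, μ¹(c₂)=b₅, μ¹(aᵢ)=0, the cohomology in degree −1 is 1-dimensional, generated by the class of c₁+c₂. In particular this bilinearized cohomology (for the pair (ε₁,ε₂)) differs in degree −1 from the linearized cohomology of ε₁ alone, which vanishes in degree −1; hence the augmentations ε₁ and ε₂ of the Chekanov DGA of m(9₄₆) are not equivalent. -/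

import Mathlib

/-- Generators of the Chekanov DGA of m(9₄₆). -/
inductive G : Type
  | a1 | a2 | a3 | a4 | a5 | b1 | b2 | b3 | b4 | b5 | b6 | c1 | c2
  deriving DecidableEq

instance instFintypeG : Fintype G :=
  Fintype.ofList [G.a1, G.a2, G.a3, G.a4, G.a5, G.b1, G.b2, G.b3, G.b4, G.b5, G.b6, G.c1, G.c2]
    (by intro x; cases x <;> simp)

open G

/-- The ℤ/2-vector space with basis the 13 generators. -/
abbrev V : Type := G → ZMod 2

/-- The basis vector corresponding to a generator. -/
def e (g : G) : V := Pi.single g 1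

/-- The span of the degree-1 basis vectors a₁, ..., a₅. -/
def spanA : Submodule (ZMod 2) V :=
  Submodule.span (ZMod 2) {e a1, e a2, e a3, e a4, e a5}

/-- The span of the degree-0 basis vectors b₁, ..., b₆. -/
def spanB : Submodule (ZMod 2) V :=
  Submodule.span (ZMod 2) {e b1, e b2, e b3, e b4, e b5, e b6}

/-- The span of the degree-(−1) basis vectors c₁, c₂. -/
def spanC : Submodule (ZMod 2) V :=
  Submodule.span (ZMod 2) {e c1, e c2}

/-- The differential μ¹ = μ¹_{ε₁,ε₁} of the ε₁-linearized Legendrian contact cohomology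
complex of m(9₄₆), on basis vectors. -/
def row1 : G → V
  | b1 => e a5
  | b2 => e a1 + e a2 + e a3 + e a4
  | b3 => e a3
  | b4 => e a4
  | b5 => e a3
  | b6 => 0
  | c1 => e b3 + e b5
  | c2 => e b6
  | _ => 0

/-- μ¹_{ε₁,ε₁} as a linear endomorphism of V. -/
noncomputable def mu1 : V →ₗ[ZMod 2] V :=
  Matrix.mulVecLin (fun r g => row1 g r)

/-- The differential μ¹_{ε₁,ε₂} of the (ε₁,ε₂)-bilinearized Legendrian contact cohomology
complex of m(9₄₆), on basis vectors. -/
def row12 : G → V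
  | b1 => e a4 + e a5
  | b2 => e a1 + e a3 + e a4 + e a5
  | b3 => e a3
  | b4 => e a2
  | b5 => 0
  | b6 => e a1 + e a2
  | c1 => e b5
  | c2 => e b5
  | _ => 0

/-- μ¹_{ε₁,ε₂} as a linear endomorphism of V. -/
noncomputable def mu12 : V →ₗ[ZMod 2] V :=
  Matrix.mulVecLin (fun r g => row12 g r)

/-- The degree-(−1) cohomology of the (ε₁,ε₂)-bilinearized complex is one-dimensional,
generated by the class of c₁ + c₂ (the kernel of μ¹_{ε₁,ε₂} on span{c₁,c₂} is
span{c₁ + c₂}), while for the ε₁-linearized complex the kernel in degree −1 is zero;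
hence the two augmentations ε₁ and ε₂ are not equivalent. -/
theorem degree_minus_one_cohomology_distinguishes_augmentations :
    (∀ v ∈ spanC, (mu12 v = 0 ↔ ∃ c : ZMod 2, v = c • (e c1 + e c2))) ∧
    (∀ v ∈ spanC, mu1 v = 0 → v = 0) := by
  have key : ∀ (row : G → V) (g : G),
      Matrix.mulVecLin (fun r g' => row g' r) (e g) = row g := by
    intro row g
    funext r
    change (Matrix.mulVec (Matrix.of (fun r g' => row g' r)) (e g)) r = _
    simp [e, Matrix.mulVec_single]
  constructor
  · intro v hv
    rw [spanC, Submodule.mem_span_pair] at hv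
    obtain ⟨a, b, rfl⟩ := hv
    constructor
    · intro h
      simp only [map_add, map_smul, mu12, key, row12] at h
      have hab : a + b = 0 := by
        have := congrFun h b5
        simpa [e, Pi.single_apply] using this
      refine ⟨a, ?_⟩
      have hba : b = a := (by decide : ∀ x y : ZMod 2, x + y = 0 → y = x) a b hab
      rw [hba, smul_add]
    · rintro ⟨c, hc⟩
      rw [hc]
      simp only [map_smul, smul_add, map_add, mu12, key, row12]
      rw [← smul_add]
      have : e b5 + e b5 = 0 := by
        funext g; simp [e, Pi.single_apply]; split <;> decide
      simp [this]
  · intro v hv h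
    rw [spanC, Submodule.mem_span_pair] at hv
    obtain ⟨a, b, rfl⟩ := hv
    simp only [map_add, map_smul, mu1, key, row1] at h
    have ha : a = 0 := by
      have := congrFun h b3
      simpa [e, Pi.single_apply] using this
    have hb : b = 0 := by
      have := congrFun h b6
      simpa [e, Pi.single_apply] using this
    simp [ha, hb]
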